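/- Let G be a simple graph on vertex set V = {1,…,n} with symmetric susceptances b(u,v) = b(v,u) for adjacent u,v, let L be the set of edges carrying a line power-flow measurement and P the set of buses carrying an injection measurement, and let H be the measurement matrix whose rows are the flow measurement rows for edges in L and the injection measurement rows for buses in P. Suppose the edge {s,t} ∈ L has b(s,t) ≠ 0 and let i be the index of its flow measurement row. Then for every S ⊆ V with s ∈ S and t ∉ S, the indicator vector θ of S satisfies (Hθ)_i = b(s,t) ≠ 0 and card(Hθ) ≤ |{e ∈ L : e is cut by S}| + |{v ∈ P : v is incident to an edge cut by S}|. In particular, the minimum of card(Hθ) over θ with (Hθ)_i ≠ 0 is at most δ(S) + δ_inj(S) with unit meter weights. -/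

import Mathlib

open Finset Matrix

/-- The row of the measurement matrix corresponding to the line power-flow measurement
`θ ↦ b u v * (θ u - θ v)` on the edge `{u, v}`. -/
def flowRow (n : ℕ) (b : Fin n → Fin n → ℝ) (u v : Fin n) : Fin n → ℝ :=
  fun x => if x = u then b u v else if x = v then -(b u v) else 0

/-- The row of the measurement matrix corresponding to the bus injection measurement
`θ ↦ ∑_{u adjacent to x} b x u * (θ x - θ u)` at bus `x`. -/
def injRow (n : ℕ) (G : SimpleGraph (Fin n)) [DecidableRel G.Adj]
    (b : Fin n → Fin n → ℝ) (x : Fin n) : Fin n → ℝ :=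
  fun y => if y = x then ∑ u ∈ Finset.univ.filter (fun u => G.Adj x u), b x u
           else if G.Adj x y then -(b x y) else 0



lemma flow_sum (n : ℕ) (b : Fin n → Fin n → ℝ) (u v : Fin n) (huv : u ≠ v) (θ : Fin n → ℝ) :
    ∑ x, flowRow n b u v x * θ x = b u v * (θ u - θ v) := by
  have h : ∀ x, flowRow n b u v x * θ x =
      (if x = u then b u v * θ u else 0) + (if x = v then -(b u v) * θ v else 0) := by
    intro x
    unfold flowRow
    split_ifs with h1 h2 <;> simp_all <;> ring
  rw [Finset.sum_congr rfl (fun x _ => h x), Finset.sum_add_distrib,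
    Finset.sum_ite_eq' Finset.univ u, Finset.sum_ite_eq' Finset.univ v]
  simp; ring

lemma inj_sum (n : ℕ) (G : SimpleGraph (Fin n)) [DecidableRel G.Adj]
    (b : Fin n → Fin n → ℝ) (x : Fin n) (θ : Fin n → ℝ) :
    ∑ y, injRow n G b x y * θ y =
      ∑ u ∈ Finset.univ.filter (fun u => G.Adj x u), b x u * (θ x - θ u) := by
  have h : ∀ y, injRow n G b x y * θ y =
      (if y = x then (∑ u ∈ Finset.univ.filter (fun u => G.Adj x u), b x u) * θ x else 0)
      + (if G.Adj x y then -(b x y) * θ y else 0) := by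
    intro y
    by_cases hy : y = x
    · subst hy; simp [injRow, SimpleGraph.irrefl]
    · simp only [injRow, if_neg hy]
      split_ifs <;> simp
  rw [Finset.sum_congr rfl (fun y _ => h y), Finset.sum_add_distrib,
    Finset.sum_ite_eq' Finset.univ x]
  rw [← Finset.sum_filter]
  simp [mul_sub, Finset.sum_sub_distrib, Finset.sum_mul]
  ring

open scoped Classical in
/-- Let `H` be the measurement matrix whose rows are (injectively indexed)
flow measurements on the edges in `L` and injection measurements at the buses in `P`,
and let row `i` be the flow measurement of the edge `{s, t} ∈ L` with `b s t ≠ 0`. Then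
for every cut `S` with `s ∈ S` and `t ∉ S`, the indicator vector `θ` of `S` satisfies
`(Hθ) i = b s t ≠ 0` and `card (Hθ)` is at most the number of measured lines cut by `S`
plus the number of measured buses incident to a cut edge. In particular, the minimum of
`card (Hθ')` over `θ'` with `(Hθ') i ≠ 0` is at most `δ(S) + δ_inj(S)` with unit meter
weights. -/
theorem stmt12 (m n : ℕ) (G : SimpleGraph (Fin n)) [DecidableRel G.Adj]
    (b : Fin n → Fin n → ℝ) (hb : ∀ u v : Fin n, G.Adj u v → b u v = b v u)
    (L : Finset (Sym2 (Fin n))) (hL : ↑L ⊆ G.edgeSet) (P : Finset (Fin n))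
    (H : Matrix (Fin m) (Fin n) ℝ)
    (rowMeas : Fin m → Sym2 (Fin n) ⊕ Fin n)
    (hinj : Function.Injective rowMeas)
    (hrow : ∀ r : Fin m,
      (∀ e : Sym2 (Fin n), rowMeas r = Sum.inl e →
        e ∈ L ∧ ∃ u v : Fin n, e = s(u, v) ∧ H r = flowRow n b u v) ∧
      (∀ x : Fin n, rowMeas r = Sum.inr x → x ∈ P ∧ H r = injRow n G b x))
    (s t : Fin n) (hadj : G.Adj s t) (hbst : b s t ≠ 0)
    (hstL : s(s, t) ∈ L)
    (i : Fin m) (hi : rowMeas i = Sum.inl s(s, t)) (hHi : H i = flowRow n b s t)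
    (S : Finset (Fin n)) (hs : s ∈ S) (ht : t ∉ S) :
    let θ : Fin n → ℝ := fun x => if x ∈ S then 1 else 0
    let bound : ℕ :=
      (L.filter (fun e => (∃ u ∈ e, u ∈ S) ∧ (∃ u ∈ e, u ∉ S))).card +
      (P.filter (fun x => ∃ u : Fin n, G.Adj x u ∧
        ((x ∈ S ∧ u ∉ S) ∨ (x ∉ S ∧ u ∈ S)))).card
    H.mulVec θ i = b s t ∧
    (Finset.univ.filter (fun j => H.mulVec θ j ≠ 0)).card ≤ bound ∧
    ∃ θ' : Fin n → ℝ, H.mulVec θ' i ≠ 0 ∧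
      (Finset.univ.filter (fun j => H.mulVec θ' j ≠ 0)).card ≤ bound := by
  intro θ bound
  have hθ : θ = fun x => if x ∈ S then (1 : ℝ) else 0 := rfl
  -- indicator values differ exactly when memberships differ
  have hθne : ∀ u v : Fin n, θ u ≠ θ v → ((u ∈ S ∧ v ∉ S) ∨ (u ∉ S ∧ v ∈ S)) := by
    intro u v huv
    rw [hθ] at huv
    by_cases hu : u ∈ S <;> by_cases hv : v ∈ S <;> simp_all
  have hval : H.mulVec θ i = b s t := by
    have : H.mulVec θ i = ∑ x, flowRow n b s t x * θ x := by
      simp [Matrix.mulVec, dotProduct, hHi]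
    rw [this, flow_sum n b s t hadj.ne θ, hθ]
    simp [hs, ht]
  have hcard : (Finset.univ.filter (fun j => H.mulVec θ j ≠ 0)).card ≤ bound := by
    set A := L.filter (fun e => (∃ u ∈ e, u ∈ S) ∧ (∃ u ∈ e, u ∉ S)) with hA
    set B := P.filter (fun x => ∃ u : Fin n, G.Adj x u ∧
        ((x ∈ S ∧ u ∉ S) ∨ (x ∉ S ∧ u ∈ S))) with hB
    have hbound : bound = A.card + B.card := rfl
    rw [hbound]
    set T : Finset (Sym2 (Fin n) ⊕ Fin n) :=
      A.map ⟨Sum.inl, Sum.inl_injective⟩ ∪ B.map ⟨Sum.inr, Sum.inr_injective⟩ with hT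
    have hTcard : T.card = A.card + B.card := by
      rw [hT, Finset.card_union_of_disjoint, Finset.card_map, Finset.card_map]
      simp [Finset.disjoint_left]
    rw [← hTcard]
    apply Finset.card_le_card_of_injOn rowMeas
    · intro j hj
      rw [Finset.mem_coe, Finset.mem_filter] at hj
      rw [Finset.mem_coe]
      have hj0 : H.mulVec θ j ≠ 0 := hj.2
      rcases hr : rowMeas j with e | x
      · obtain ⟨heL, u, v, heq, hHj⟩ := (hrow j).1 e hr
        have hadjuv : G.Adj u v := by
          have := hL heL
          rw [heq] at this
          exact this
        have hsum : H.mulVec θ j = b u v * (θ u - θ v) := by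
          have : H.mulVec θ j = ∑ x, flowRow n b u v x * θ x := by
            simp [Matrix.mulVec, dotProduct, hHj]
          rw [this, flow_sum n b u v hadjuv.ne θ]
        have hne : θ u ≠ θ v := by
          intro hh
          apply hj0
          rw [hsum, hh]; ring
        have hcut := hθne u v hne
        have heA : e ∈ A := by
          rw [hA, Finset.mem_filter]
          refine ⟨heL, ?_, ?_⟩
          · rcases hcut with ⟨h1, _⟩ | ⟨_, h1⟩
            · exact ⟨u, by rw [heq]; simp, h1⟩
            · exact ⟨v, by rw [heq]; simp, h1⟩
          · rcases hcut with ⟨_, h1⟩ | ⟨h1, _⟩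
            · exact ⟨v, by rw [heq]; simp, h1⟩
            · exact ⟨u, by rw [heq]; simp, h1⟩
        rw [hT]
        apply Finset.mem_union_left
        simp [heA]
      · obtain ⟨hxP, hHj⟩ := (hrow j).2 x hr
        have hsum : H.mulVec θ j =
            ∑ u ∈ Finset.univ.filter (fun u => G.Adj x u), b x u * (θ x - θ u) := by
          have : H.mulVec θ j = ∑ y, injRow n G b x y * θ y := by
            simp [Matrix.mulVec, dotProduct, hHj]
          rw [this, inj_sum]
        rw [hsum] at hj0
        obtain ⟨u, hu, hu0⟩ := Finset.exists_ne_zero_of_sum_ne_zero hj0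
        rw [Finset.mem_filter] at hu
        have hne : θ x ≠ θ u := by
          intro hh
          apply hu0
          rw [hh]; ring
        have hxB : x ∈ B := by
          rw [hB, Finset.mem_filter]
          exact ⟨hxP, u, hu.2, hθne x u hne⟩
        rw [hT]
        apply Finset.mem_union_right
        simp [hxB]
    · exact hinj.injOn
  exact ⟨hval, hcard, θ, by rw [hval]; exact hbst, hcard⟩
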